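/- Let p be an odd prime with p ≡ 1 (mod k₁+k₂), 1 ≤ k₁ ≤ k₂, and gcd(p, k₂!) = 1. Then M = [−k₁,k₂] \ {0} (viewed in Z_p*) is a direct factor of the multiplicative group Z_p* if and only if M is a direct factor of the subgroup H of Z_p* generated by {−1, 2, …, k₂}. -/
import Mathlib

section aux

variable {p k₁ k₂ : ℕ}

lemma aux_k2_lt (hp : p.Prime) (h1 : 1 ≤ k₁) (h12 : k₁ ≤ k₂)
    (hmod : p % (k₁ + k₂) = 1) : k₂ < p := by
  have hn : 2 ≤ k₁ + k₂ := by omega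
  have := Nat.div_add_mod p (k₁ + k₂)
  have hq : p / (k₁ + k₂) ≠ 0 := by
    intro h
    rw [h] at this
    simp [hmod] at this
    exact hp.one_lt.ne' (by omega)
  have : k₁ + k₂ ≤ (k₁ + k₂) * (p / (k₁ + k₂)) := Nat.le_mul_of_pos_right _ (Nat.pos_of_ne_zero hq)
  omega

lemma aux_ne_zero (hp : p.Prime) (h1 : 1 ≤ k₁) (h12 : k₁ ≤ k₂)
    (hmod : p % (k₁ + k₂) = 1) {r : ℤ} (hr : r ∈ Finset.Icc (-(k₁ : ℤ)) (k₂ : ℤ))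
    (hr0 : r ≠ 0) : (r : ZMod p) ≠ 0 := by
  haveI : Fact p.Prime := ⟨hp⟩
  have hk2 : k₂ < p := aux_k2_lt hp h1 h12 hmod
  rw [Ne, ZMod.intCast_zmod_eq_zero_iff_dvd]
  intro hdvd
  have hd : p ∣ r.natAbs := Int.natAbs_dvd_natAbs.mpr (by simpa using hdvd)
  have hle := Nat.le_of_dvd (Nat.pos_of_ne_zero (Int.natAbs_ne_zero.mpr hr0)) hd
  simp only [Finset.mem_Icc] at hr
  omega

/-- the generating set -/
def genSet (p k₂ : ℕ) : Set (ZMod p)ˣ :=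
  {u : (ZMod p)ˣ | (u : ZMod p) = -1 ∨
    ∃ k : ℕ, 2 ≤ k ∧ k ≤ k₂ ∧ (u : ZMod p) = (k : ZMod p)}

lemma aux_pos_mem (u : (ZMod p)ˣ) (j : ℕ) (hj1 : 1 ≤ j) (hjk : j ≤ k₂)
    (hu : (u : ZMod p) = (j : ZMod p)) : u ∈ Subgroup.closure (genSet p k₂) := by
  rcases eq_or_lt_of_le hj1 with h | h
  · have : (u : ZMod p) = 1 := by rw [hu, ← h]; simp
    have : u = 1 := Units.ext (by simpa using this)
    rw [this]; exact one_mem _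
  · exact Subgroup.subset_closure (Or.inr ⟨j, h, hjk, hu⟩)

lemma aux_mem (hp : p.Prime) (h1 : 1 ≤ k₁) (h12 : k₁ ≤ k₂)
    (hmod : p % (k₁ + k₂) = 1) (u : (ZMod p)ˣ) {r : ℤ}
    (hr : r ∈ Finset.Icc (-(k₁ : ℤ)) (k₂ : ℤ)) (hr0 : r ≠ 0)
    (hu : (u : ZMod p) = (r : ZMod p)) : u ∈ Subgroup.closure (genSet p k₂) := by
  haveI : Fact p.Prime := ⟨hp⟩
  simp only [Finset.mem_Icc] at hr
  rcases lt_or_gt_of_ne hr0 with hneg | hpos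
  · -- r = -j, 1 ≤ j ≤ k₁
    set j : ℕ := (-r).toNat with hj
    have hjr : (j : ℤ) = -r := Int.toNat_of_nonneg (by omega)
    have hj1 : 1 ≤ j := by omega
    have hjk : j ≤ k₂ := by omega
    have hjz : ((j : ℕ) : ZMod p) ≠ 0 := by
      have : ((j : ℤ) : ZMod p) ≠ 0 :=
        aux_ne_zero hp h1 h12 hmod (r := (j : ℤ)) (by simp [Finset.mem_Icc]; omega) (by omega)
      simpa using this
    obtain ⟨w, hw⟩ := isUnit_iff_ne_zero.mpr hjz
    have hwmem : w ∈ Subgroup.closure (genSet p k₂) := aux_pos_mem w j hj1 hjk hw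
    have hv : ((u * w⁻¹ : (ZMod p)ˣ) : ZMod p) = -1 := by
      have hwne : (w : ZMod p) ≠ 0 := by rw [hw]; exact hjz
      rw [Units.val_mul, Units.val_inv_eq_inv_val, hu, hw]
      have hru : (r : ZMod p) = -((j : ℕ) : ZMod p) := by
        have : (r : ZMod p) = ((-(j:ℤ) : ℤ) : ZMod p) := by rw [hjr]; ring_nf
        simpa using this
      rw [hru]
      field_simp
    have hvmem : u * w⁻¹ ∈ Subgroup.closure (genSet p k₂) :=
      Subgroup.subset_closure (Or.inl hv)
    have : u = (u * w⁻¹) * w := by group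
    rw [this]; exact mul_mem hvmem hwmem
  · set j : ℕ := r.toNat with hj
    have hjr : (j : ℤ) = r := Int.toNat_of_nonneg (by omega)
    exact aux_pos_mem u j (by omega) (by omega) (by rw [hu, ← hjr]; simp)

end aux

theorem stmt14 (p : ℕ) (hp : p.Prime) (hodd : Odd p) (k₁ k₂ : ℕ)
    (h1 : 1 ≤ k₁) (h12 : k₁ ≤ k₂) (hmod : p % (k₁ + k₂) = 1)
    (hcop : Nat.gcd p k₂.factorial = 1) :
    (∃ B : Finset (ZMod p)ˣ, ∀ g : (ZMod p)ˣ,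
        ∃! r : ℤ × (ZMod p)ˣ,
          r.1 ∈ Finset.Icc (-(k₁ : ℤ)) (k₂ : ℤ) ∧ r.1 ≠ 0 ∧ r.2 ∈ B ∧
            (r.1 : ZMod p) * (r.2 : ZMod p) = (g : ZMod p)) ↔
    (∃ B : Finset (ZMod p)ˣ,
        (∀ b ∈ B, b ∈ Subgroup.closure
          {u : (ZMod p)ˣ | (u : ZMod p) = -1 ∨
            ∃ k : ℕ, 2 ≤ k ∧ k ≤ k₂ ∧ (u : ZMod p) = (k : ZMod p)}) ∧
        ∀ g ∈ Subgroup.closure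
          {u : (ZMod p)ˣ | (u : ZMod p) = -1 ∨
            ∃ k : ℕ, 2 ≤ k ∧ k ≤ k₂ ∧ (u : ZMod p) = (k : ZMod p)},
          ∃! r : ℤ × (ZMod p)ˣ,
            r.1 ∈ Finset.Icc (-(k₁ : ℤ)) (k₂ : ℤ) ∧ r.1 ≠ 0 ∧ r.2 ∈ B ∧
              (r.1 : ZMod p) * (r.2 : ZMod p) = (g : ZMod p)) := by
  haveI : Fact p.Prime := ⟨hp⟩
  classical
  have hSset : {u : (ZMod p)ˣ | (u : ZMod p) = -1 ∨
      ∃ k : ℕ, 2 ≤ k ∧ k ≤ k₂ ∧ (u : ZMod p) = (k : ZMod p)} = genSet p k₂ := rfl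
  rw [hSset]
  set H : Subgroup (ZMod p)ˣ := Subgroup.closure (genSet p k₂) with hH
  constructor
  · -- forward
    rintro ⟨B, hB⟩
    refine ⟨B.filter (· ∈ H), fun b hb => (Finset.mem_filter.mp hb).2, fun g hg => ?_⟩
    obtain ⟨r, ⟨hr1, hr0, hrB, hre⟩, hru⟩ := hB g
    -- r.2 ∈ H
    have hmne : ((r.1 : ℤ) : ZMod p) ≠ 0 := aux_ne_zero hp h1 h12 hmod hr1 hr0
    obtain ⟨u, hu⟩ := isUnit_iff_ne_zero.mpr hmne
    have huH : u ∈ H := aux_mem hp h1 h12 hmod u hr1 hr0 hu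
    have hub : u * r.2 = g := Units.ext (by rw [Units.val_mul, hu]; exact hre)
    have hr2H : r.2 ∈ H := by
      have : r.2 = u⁻¹ * g := by rw [← hub]; group
      rw [this]; exact mul_mem (inv_mem huH) hg
    refine ⟨r, ⟨hr1, hr0, Finset.mem_filter.mpr ⟨hrB, hr2H⟩, hre⟩, ?_⟩
    rintro s ⟨hs1, hs0, hsB, hse⟩
    exact hru s ⟨hs1, hs0, (Finset.mem_filter.mp hsB).1, hse⟩
  · -- backward
    rintro ⟨B₀, hB₀H, hB₀⟩
    haveI : Fintype ((ZMod p)ˣ ⧸ H) := Fintype.ofFinite _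
    set rep : ((ZMod p)ˣ ⧸ H) → (ZMod p)ˣ := Quotient.out with hrep
    refine ⟨Finset.image (fun pr : (ZMod p)ˣ × ((ZMod p)ˣ ⧸ H) => pr.1 * rep pr.2)
      (B₀ ×ˢ Finset.univ), fun g => ?_⟩
    set t : (ZMod p)ˣ := rep (QuotientGroup.mk g) with ht
    have htg : (QuotientGroup.mk t : (ZMod p)ˣ ⧸ H) = QuotientGroup.mk g :=
      QuotientGroup.out_eq' _
    have hhH : g * t⁻¹ ∈ H := by
      have : t⁻¹ * g ∈ H := QuotientGroup.eq.mp htg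
      rwa [mul_comm] at this
    obtain ⟨r, ⟨hr1, hr0, hrB, hre⟩, hru⟩ := hB₀ (g * t⁻¹) hhH
    refine ⟨(r.1, r.2 * t), ⟨hr1, hr0, ?_, ?_⟩, ?_⟩
    · exact Finset.mem_image.mpr ⟨(r.2, QuotientGroup.mk g),
        Finset.mem_product.mpr ⟨hrB, Finset.mem_univ _⟩, rfl⟩
    · show (r.1 : ZMod p) * ((r.2 * t : (ZMod p)ˣ) : ZMod p) = (g : ZMod p)
      rw [Units.val_mul, ← mul_assoc, hre, ← Units.val_mul]
      congr 1
      group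
    · rintro ⟨s1, b⟩ ⟨hs1, hs0, hsB, hse⟩
      obtain ⟨⟨b₀, q⟩, hbq, hbe⟩ := Finset.mem_image.mp hsB
      have hb₀B : b₀ ∈ B₀ := (Finset.mem_product.mp hbq).1
      set t' : (ZMod p)ˣ := rep q with ht'
      have hbval : b = b₀ * t' := hbe.symm
      have hmne : ((s1 : ℤ) : ZMod p) ≠ 0 := aux_ne_zero hp h1 h12 hmod hs1 hs0
      obtain ⟨u, hu⟩ := isUnit_iff_ne_zero.mpr hmne
      have huH : u ∈ H := aux_mem hp h1 h12 hmod u hs1 hs0 hu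
      have hub : u * (b₀ * t') = g := Units.ext (by
        rw [Units.val_mul, hu, ← hbval]; exact hse)
      -- mk g = mk t'
      have hq : QuotientGroup.mk t' = (QuotientGroup.mk g : (ZMod p)ˣ ⧸ H) := by
        rw [QuotientGroup.eq]
        have hcomm : u * (b₀ * t') = t' * (u * b₀) := by
          simp [mul_comm, mul_left_comm, mul_assoc]
        have : t'⁻¹ * g = u * b₀ := by rw [← hub, hcomm, inv_mul_cancel_left]
        rw [this]
        exact mul_mem huH (hB₀H b₀ hb₀B)
      have hqq : q = QuotientGroup.mk g := by
        rw [← hq, ht']; exact (QuotientGroup.out_eq' q).symm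
      have htt : t' = t := by rw [ht', hqq, ht]
      have hub2 : u * b₀ = g * t⁻¹ := by
        rw [htt] at hub
        rw [← hub]; group
      have hse2 : (s1 : ZMod p) * ((b₀ : (ZMod p)ˣ) : ZMod p) = ((g * t⁻¹ : (ZMod p)ˣ) : ZMod p) := by
        rw [← hub2, Units.val_mul, hu]
      have := hru (s1, b₀) ⟨hs1, hs0, hb₀B, hse2⟩
      have hs1r : s1 = r.1 := congrArg Prod.fst this
      have hb₀r : b₀ = r.2 := congrArg Prod.snd this
      refine Prod.ext hs1r ?_
      show b = r.2 * t
      rw [hbval, htt, hb₀r]
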